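/- Let F be a field, t, q ∈ F invertible, r ≥ 2, and R a unital associative F-algebra containing r−1 mutually commuting t-oscillator triples (a_i, a†_i, k_i), 2 ≤ i ≤ r. Let s_2,…,s_r ∈ R be pairwise commuting elements such that for each 2 ≤ i ≤ r: a_i·s_i = q^{i−1}·s_i·a_i, a†_i·s_i = q^{1−i}·s_i·a†_i, k_i·s_i = s_i·k_i, and s_i commutes with a_j, a†_j, k_j for all j ≠ i. Set s = s_r·s_{r−1}···s_2, and let L̃(x) be the (r+1)×r matrix defined by: L̃_{00} = 1; L̃_{0j} = a_{j+1} for 1 ≤ j ≤ r−1; L̃_{10} = x·k_2···k_r; L̃_{i0} = x·a†_i·k_{i+1}···k_r for 2 ≤ i ≤ r; L̃_{i,i−1} = x·k_{i+1}···k_r for 2 ≤ i ≤ r; L̃_{ij} = x·a_{j+1}·a†_i·k_{i+1}···k_r for 1 ≤ j+1 < i ≤ r; L̃_{ij} = 0 for 1 ≤ i ≤ j ≤ r−1. Then for all i ∈ {0,…,r}, j ∈ {0,…,r−1}, and x ∈ F: s·L̃_{ij}(q·x) = q^{i−j}·L̃_{ij}(x)·s. -/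

import Mathlib

/-!
STATEMENT 8: the twist operator `s = s_r·s_{r−1}⋯s_2` satisfies
`s·L̃_{ij}(q·x) = q^{i−j}·L̃_{ij}(x)·s` for the reduced `(r+1) × r` matrix `L̃(x)`.
-/

open scoped BigOperators

/-- A `t`-oscillator triple `(a, a†, k)` in an `F`-algebra `R`. -/
def IsOscTriple {F R : Type*} [Field F] [Ring R] [Algebra F R]
    (t : F) (a ad k : R) : Prop :=
  a * k = t • (k * a) ∧ ad * k = t⁻¹ • (k * ad) ∧
    a * ad = 1 - k ∧ ad * a = 1 - t⁻¹ • k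

/-- The ordered product `k_{i+1} · k_{i+2} ⋯ k_r`. -/
def kprod {R : Type*} [Ring R] (k : ℕ → R) (i r : ℕ) : R :=
  ((List.range' (i + 1) (r - i)).map k).prod

/-- The reduced `(r+1) × r` matrix `L̃(x)`. -/
def Ltil {F R : Type*} [Field F] [Ring R] [Algebra F R]
    (r : ℕ) (a ad k : ℕ → R) (x : F) :
    Matrix (Fin (r + 1)) (Fin r) R :=
  fun i j =>
    if i.val = 0 then (if j.val = 0 then 1 else a (j.val + 1))
    else if j.val = 0 then
      (if i.val = 1 then x • kprod k 1 r else x • (ad i.val * kprod k i.val r))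
    else if i.val = j.val + 1 then x • kprod k i.val r
    else if j.val + 1 < i.val then x • (a (j.val + 1) * ad i.val * kprod k i.val r)
    else 0

/-- The ordered product `s = s_r·s_{r−1}⋯s_2`. -/
def sTwist {R : Type*} [Ring R] (s : ℕ → R) (r : ℕ) : R :=
  (((List.range' 2 (r - 1)).reverse).map s).prod

private lemma move_list_prod' {F R : Type*} [Field F] [Ring R] [Algebra F R]
    (x : R) (g : ℕ → R) (f : ℕ → F) :
    ∀ l : List ℕ, (∀ m ∈ l, x * g m = f m • (g m * x)) →
      x * (l.map g).prod = (l.map f).prod • ((l.map g).prod * x)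
  | [], _ => by simp
  | m :: l, h => by
    have ih := move_list_prod' x g f l (fun m hm => h m (List.mem_cons_of_mem _ hm))
    simp only [List.map_cons, List.prod_cons]
    calc x * (g m * (l.map g).prod)
        = (x * g m) * (l.map g).prod := by rw [mul_assoc]
      _ = (f m • (g m * x)) * (l.map g).prod := by rw [h m List.mem_cons_self]
      _ = f m • (g m * (x * (l.map g).prod)) := by
          rw [smul_mul_assoc, mul_assoc]
      _ = f m • (g m * ((l.map f).prod • ((l.map g).prod * x))) := by rw [ih]
      _ = (f m * (l.map f).prod) • (g m * (l.map g).prod * x) := by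
          rw [mul_smul_comm, smul_smul, mul_assoc]

private lemma prod_map_ite' {F : Type*} [Field F] (c : F) (j : ℕ) :
    ∀ l : List ℕ, (l.map fun m => if m = j then c else 1).prod = c ^ l.count j
  | [] => by simp
  | m :: l => by
    by_cases h : m = j
    · subst h
      simp [List.count_cons_self, prod_map_ite' c m l, pow_succ, mul_comm]
    · simp [h, List.count_cons_of_ne (Ne.symm h), prod_map_ite' c j l]

theorem twist_relation_for_Ltil
    {F R : Type*} [Field F] [Ring R] [Algebra F R]
    (r : ℕ) (hr : 2 ≤ r) (t q : F) (ht : t ≠ 0) (hq : q ≠ 0)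
    (a ad k s : ℕ → R)
    (hosc : ∀ i, 2 ≤ i → i ≤ r → IsOscTriple t (a i) (ad i) (k i))
    (hoscComm : ∀ i j, 2 ≤ i → i ≤ r → 2 ≤ j → j ≤ r → i ≠ j →
      ∀ u ∈ [a i, ad i, k i], ∀ v ∈ [a j, ad j, k j], Commute u v)
    (hss : ∀ i j, Commute (s i) (s j))
    (hsa : ∀ i, 2 ≤ i → i ≤ r → a i * s i = (q ^ (i - 1)) • (s i * a i))
    (hsad : ∀ i, 2 ≤ i → i ≤ r → ad i * s i = (q ^ ((1 : ℤ) - (i : ℤ))) • (s i * ad i))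
    (hsk : ∀ i, 2 ≤ i → i ≤ r → k i * s i = s i * k i)
    (hsother : ∀ i j, 2 ≤ i → i ≤ r → 2 ≤ j → j ≤ r → i ≠ j →
      ∀ v ∈ [a j, ad j, k j], Commute (s i) v) :
    ∀ (i : Fin (r + 1)) (j : Fin r) (x : F),
      sTwist s r * Ltil r a ad k (q * x) i j
      = (q ^ ((i.val : ℤ) - (j.val : ℤ))) • (Ltil r a ad k x i j * sTwist s r) := by
  set l : List ℕ := (List.range' 2 (r - 1)).reverse with hl
  have hmeml : ∀ m, m ∈ l ↔ (2 ≤ m ∧ m ≤ r) := by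
    intro m
    rw [hl, List.mem_reverse, List.mem_range'_1]
    omega
  have hcount : ∀ j, 2 ≤ j → j ≤ r → l.count j = 1 := by
    intro j h2 hjr
    exact List.count_eq_one_of_mem (List.nodup_reverse.mpr List.nodup_range') ((hmeml j).mpr ⟨h2, hjr⟩)
  have hS : sTwist s r = (l.map s).prod := rfl
  -- moving `a j` past the twist
  have hA : ∀ j, 2 ≤ j → j ≤ r →
      a j * sTwist s r = (q ^ ((j : ℤ) - 1)) • (sTwist s r * a j) := by
    intro j h2 hjr
    have key := move_list_prod' (a j) s
      (fun m => if m = j then q ^ ((j : ℤ) - 1) else 1) l ?_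
    · rw [hS, key, prod_map_ite', hcount j h2 hjr, pow_one]
    · intro m hm
      rw [hmeml] at hm
      by_cases hmj : m = j
      · subst hmj
        simp only [if_pos rfl]
        rw [hsa m hm.1 hm.2]
        congr 1
        rw [← zpow_natCast q (m - 1)]
        congr 1
        omega
      · simp only [if_neg hmj, one_smul]
        exact ((hsother m j hm.1 hm.2 h2 hjr hmj (a j) (by simp)).eq).symm
  -- moving `ad j` past the twist
  have hAd : ∀ j, 2 ≤ j → j ≤ r →
      ad j * sTwist s r = (q ^ ((1 : ℤ) - (j : ℤ))) • (sTwist s r * ad j) := by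
    intro j h2 hjr
    have key := move_list_prod' (ad j) s
      (fun m => if m = j then q ^ ((1 : ℤ) - (j : ℤ)) else 1) l ?_
    · rw [hS, key, prod_map_ite', hcount j h2 hjr, pow_one]
    · intro m hm
      rw [hmeml] at hm
      by_cases hmj : m = j
      · subst hmj
        simp only [if_pos rfl]
        exact hsad m hm.1 hm.2
      · simp only [if_neg hmj, one_smul]
        exact ((hsother m j hm.1 hm.2 h2 hjr hmj (ad j) (by simp)).eq).symm
  -- the twist commutes with `kprod`
  have hKone : ∀ m, 2 ≤ m → m ≤ r → Commute (sTwist s r) (k m) := by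
    intro m h2 hmr
    rw [hS]
    refine Commute.list_prod_left _ _ ?_
    intro y hy
    rw [List.mem_map] at hy
    obtain ⟨n, hn, rfl⟩ := hy
    rw [hmeml] at hn
    by_cases hnm : n = m
    · subst hnm
      exact Commute.symm (hsk n hn.1 hn.2)
    · exact hsother n m hn.1 hn.2 h2 hmr hnm (k m) (by simp)
  have hK : ∀ i, 1 ≤ i → i ≤ r → Commute (sTwist s r) (kprod k i r) := by
    intro i h1 hir
    refine Commute.list_prod_right _ _ ?_
    intro y hy
    rw [List.mem_map] at hy
    obtain ⟨n, hn, rfl⟩ := hy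
    rw [List.mem_range'_1] at hn
    exact hKone n (by omega) (by omega)
  -- converse directions
  have hA' : ∀ j, 2 ≤ j → j ≤ r →
      sTwist s r * a j = (q ^ ((1 : ℤ) - (j : ℤ))) • (a j * sTwist s r) := by
    intro j h2 hjr
    rw [hA j h2 hjr, smul_smul, ← zpow_add₀ hq]
    rw [show (1 : ℤ) - (j : ℤ) + ((j : ℤ) - 1) = 0 by ring, zpow_zero, one_smul]
  have hAd' : ∀ j, 2 ≤ j → j ≤ r →
      sTwist s r * ad j = (q ^ ((j : ℤ) - 1)) • (ad j * sTwist s r) := by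
    intro j h2 hjr
    rw [hAd j h2 hjr, smul_smul, ← zpow_add₀ hq]
    rw [show (j : ℤ) - 1 + (1 - (j : ℤ)) = 0 by ring, zpow_zero, one_smul]
  -- reduction for smul-type entries
  have main_smul : ∀ (Y : R) (e : ℤ) (x : F),
      sTwist s r * Y = (q ^ (e - 1)) • (Y * sTwist s r) →
      sTwist s r * ((q * x) • Y) = (q ^ e) • ((x • Y) * sTwist s r) := by
    intro Y e x h
    rw [mul_smul_comm, h, smul_smul, smul_mul_assoc, smul_smul]
    congr 1
    rw [show e = 1 + (e - 1) by ring, zpow_add₀ hq, zpow_one]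
    ring_nf
  intro i j x
  have hir : i.val ≤ r := by omega
  have hjr : j.val < r := j.isLt
  simp only [Ltil]
  by_cases hi0 : i.val = 0
  · simp only [if_pos hi0]
    by_cases hj0 : j.val = 0
    · simp only [if_pos hj0, hi0, hj0]
      simp
    · simp only [if_neg hj0]
      have h2 : 2 ≤ j.val + 1 := by omega
      have hjr' : j.val + 1 ≤ r := by omega
      rw [hA' (j.val + 1) h2 hjr', hi0]
      congr 1
      push_cast
      ring
  · simp only [if_neg hi0]
    by_cases hj0 : j.val = 0
    · simp only [if_pos hj0]
      by_cases hi1 : i.val = 1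
      · simp only [if_pos hi1]
        refine main_smul _ ((i.val : ℤ) - (j.val : ℤ)) x ?_
        rw [show ((i.val : ℤ) - (j.val : ℤ)) - 1 = 0 by omega, zpow_zero, one_smul]
        exact (hK 1 le_rfl (by omega)).eq
      · simp only [if_neg hi1]
        have h2 : 2 ≤ i.val := by omega
        refine main_smul _ ((i.val : ℤ) - (j.val : ℤ)) x ?_
        rw [← mul_assoc, hAd' i.val h2 hir, smul_mul_assoc, mul_assoc,
          (hK i.val (by omega) hir).eq, ← mul_assoc]
        congr 2
        omega
    · simp only [if_neg hj0]
      by_cases hij : i.val = j.val + 1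
      · simp only [if_pos hij]
        refine main_smul _ ((i.val : ℤ) - (j.val : ℤ)) x ?_
        rw [show ((i.val : ℤ) - (j.val : ℤ)) - 1 = 0 by omega, zpow_zero, one_smul]
        exact (hK i.val (by omega) hir).eq
      · simp only [if_neg hij]
        by_cases hlt : j.val + 1 < i.val
        · simp only [if_pos hlt]
          refine main_smul _ ((i.val : ℤ) - (j.val : ℤ)) x ?_
          · have h2i : 2 ≤ i.val := by omega
            have h2j : 2 ≤ j.val + 1 := by omega
            have hjr' : j.val + 1 ≤ r := by omega
            rw [mul_assoc, ← mul_assoc (sTwist s r), hA' (j.val + 1) h2j hjr',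
              smul_mul_assoc, mul_assoc (a (j.val + 1)), ← mul_assoc (sTwist s r),
              hAd' i.val h2i hir, smul_mul_assoc, mul_smul_comm, smul_smul,
              mul_assoc (ad i.val) (sTwist s r) (kprod k i.val r)] 
            rw [(hK i.val (by omega) hir).eq]
            simp only [mul_assoc]
            congr 1
            rw [← zpow_add₀ hq]
            congr 1
            push_cast
            ring
        · simp only [if_neg hlt]
          simp
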